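/- Let E and F be finite-dimensional real normed vector spaces. Let A : ℝ → L(E,E) and C : ℝ → L(F,F) be continuous maps, and let B : ℝ → L(E,F) be differentiable and satisfy B′(r) = C(r)∘B(r) − B(r)∘A(r) for all r ∈ ℝ. Let Sol denote the vector space of differentiable maps σ : ℝ → E such that σ′(r) = A(r)(σ(r)) for all r and B(r)(σ(r)) = 0 for all r. Then for every r₀ ∈ ℝ, the evaluation map σ ↦ σ(r₀) is a linear bijection from Sol onto ker(B(r₀)); in particular dim Sol = dim ker B(r₀). -/

import Mathlib

open ContinuousLinearMap

section LinearODE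

set_option linter.unusedSectionVars false

open Set Metric Real Topology Filter

variable {E : Type*} [NormedAddCommGroup E] [NormedSpace ℝ E] [CompleteSpace E]

theorem myHasDerivWithinAt_singleton (f : ℝ → E) (x : ℝ) (d : E) :
    HasDerivWithinAt f d {x} x := by
  have : HasFDerivWithinAt f (ContinuousLinearMap.smulRight (1 : ℝ →L[ℝ] ℝ) d) {x} x := by
    simp only [HasFDerivWithinAt, nhdsWithin_singleton, hasFDerivAtFilter_iff_isLittleO,
      Filter.prod_pure_pure, Asymptotics.isLittleO_pure, sub_self, map_zero, sub_zero]
  exact this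


omit [CompleteSpace E] in
theorem myHasDerivWithinAt_of_nmem_closure {f : ℝ → E} {s : Set ℝ} {x : ℝ} {d : E}
    (h : x ∉ closure s) : HasDerivWithinAt f d s x :=
  HasFDerivWithinAt.of_notMem_closure h


/-- Uniqueness on an open interval for a linear ODE with continuous coefficient. -/
theorem linearODE_unique_Ioo (A : ℝ → E →L[ℝ] E) (hA : Continuous A)
    {a b t₀ : ℝ} (ht₀ : t₀ ∈ Set.Ioo a b) {f g : ℝ → E}
    (hf : ∀ t ∈ Set.Ioo a b, HasDerivAt f (A t (f t)) t)
    (hg : ∀ t ∈ Set.Ioo a b, HasDerivAt g (A t (g t)) t)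
    (heq : f t₀ = g t₀) : Set.EqOn f g (Set.Ioo a b) := by
  obtain ⟨K, hK⟩ := (isCompact_Icc (a := a) (b := b)).exists_bound_of_continuousOn
    hA.continuousOn
  have hv : ∀ t, LipschitzOnWith (Real.toNNReal K) (fun x => A t x)
      ((fun t => if t ∈ Set.Icc a b then (Set.univ : Set E) else ∅) t) := by
    intro t
    by_cases h : t ∈ Set.Icc a b
    · simp only [if_pos h, lipschitzOnWith_univ]
      refine (A t).lipschitz.weaken ?_
      rw [← norm_toNNReal]
      exact Real.toNNReal_mono (hK t h)
    · simp only [if_neg h]; exact lipschitzOnWith_empty _ _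
  refine ODE_solution_unique_of_mem_Ioo (fun t _ => hv t) ht₀ (fun t ht => ⟨hf t ht, ?_⟩)
    (fun t ht => ⟨hg t ht, ?_⟩) heq <;>
  · simp only [if_pos (Ioo_subset_Icc_self ht)]; trivial


/-- Global uniqueness for a linear ODE with continuous coefficient. -/
theorem linearODE_unique (A : ℝ → E →L[ℝ] E) (hA : Continuous A)
    {t₀ : ℝ} {f g : ℝ → E}
    (hf : ∀ t, HasDerivAt f (A t (f t)) t)
    (hg : ∀ t, HasDerivAt g (A t (g t)) t)
    (heq : f t₀ = g t₀) : f = g := by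
  funext t
  have h₁ : t₀ ∈ Set.Ioo (min t t₀ - 1) (max t t₀ + 1) :=
    ⟨by linarith [min_le_right t t₀], by linarith [le_max_right t t₀]⟩
  have h₂ : t ∈ Set.Ioo (min t t₀ - 1) (max t t₀ + 1) :=
    ⟨by linarith [min_le_left t t₀], by linarith [le_max_left t t₀]⟩
  exact linearODE_unique_Ioo A hA h₁ (fun s _ => hf s) (fun s _ => hg s) heq h₂



/-- One Picard–Lindelöf step of length `1/(2M)` for a linear ODE. -/
theorem linearODE_step (A : ℝ → E →L[ℝ] E) (hA : Continuous A)
    {a b t₀ M : ℝ} (hM : 0 < M) (hbd : ∀ t ∈ Set.Icc a b, ‖A t‖ ≤ M)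
    (ht₀ : t₀ ∈ Set.Icc a b) (h₁ : b - t₀ ≤ 1 / (2 * M)) (h₂ : t₀ - a ≤ 1 / (2 * M))
    (x₀ : E) :
    ∃ f : ℝ → E, f t₀ = x₀ ∧ ∀ t ∈ Set.Icc a b,
      HasDerivWithinAt f (A t (f t)) (Set.Icc a b) t := by
  have hpl : IsPicardLindelof (fun t x => A t x) (⟨t₀, ht₀⟩ : Set.Icc a b) x₀ (‖x₀‖₊ + 1) 0
      (Real.toNNReal (M * (2 * ‖x₀‖ + 1))) (Real.toNNReal M) := by
    constructor
    · intro t ht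
      refine ((A t).lipschitz.weaken ?_).lipschitzOnWith
      rw [← norm_toNNReal]
      exact Real.toNNReal_mono (hbd t ht)
    · exact fun x _ => (hA.clm_apply continuous_const).continuousOn
    · intro t ht x hx
      rw [Real.coe_toNNReal _ (by positivity)]
      have h1 : ‖x‖ ≤ 2 * ‖x₀‖ + 1 := by
        have := mem_closedBall_iff_norm.mp hx
        push_cast at this
        have h2 : ‖x‖ ≤ ‖x - x₀‖ + ‖x₀‖ := by have := norm_sub_norm_le x x₀; linarith
        linarith
      calc ‖A t x‖ ≤ ‖A t‖ * ‖x‖ := (A t).le_opNorm x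
        _ ≤ M * (2 * ‖x₀‖ + 1) := by
          have := hbd t ht
          have := norm_nonneg (A t)
          nlinarith [norm_nonneg x]
    · rw [Real.coe_toNNReal _ (by positivity)]
      show M * (2 * ‖x₀‖ + 1) * max (b - t₀) (t₀ - a) ≤ ((‖x₀‖₊ + 1 : NNReal) : ℝ) - ((0 : NNReal) : ℝ)
      simp only [NNReal.coe_add, coe_nnnorm, NNReal.coe_one, NNReal.coe_zero, sub_zero]
      have hmax : max (b - t₀) (t₀ - a) ≤ 1 / (2 * M) := max_le h₁ h₂
      have h0 : 0 ≤ b - t₀ := by linarith [ht₀.2]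
      have h0' : 0 ≤ max (b - t₀) (t₀ - a) := le_trans h0 (le_max_left _ _)
      have hx0 := norm_nonneg x₀
      have key : M * (2 * ‖x₀‖ + 1) * (1 / (2 * M)) = ‖x₀‖ + 1/2 := by
        field_simp
      calc M * (2 * ‖x₀‖ + 1) * max (b - t₀) (t₀ - a)
          ≤ M * (2 * ‖x₀‖ + 1) * (1 / (2 * M)) := by
            apply mul_le_mul_of_nonneg_left hmax; positivity
        _ = ‖x₀‖ + 1/2 := key
        _ ≤ ‖x₀‖ + 1 := by linarith
  obtain ⟨f, hf0, hf⟩ := hpl.exists_eq_forall_mem_Icc_hasDerivWithinAt₀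
  exact ⟨f, hf0, hf⟩


/-- Gluing two solutions at a common point. -/
theorem linearODE_glue (A : ℝ → E →L[ℝ] E) {a c b : ℝ} (hac : a ≤ c) (hcb : c ≤ b)
    {f g : ℝ → E}
    (hf : ∀ t ∈ Set.Icc a c, HasDerivWithinAt f (A t (f t)) (Set.Icc a c) t)
    (hg : ∀ t ∈ Set.Icc c b, HasDerivWithinAt g (A t (g t)) (Set.Icc c b) t)
    (hfg : f c = g c) :
    ∃ u : ℝ → E, (∀ t, t ≤ c → u t = f t) ∧ (∀ t, c ≤ t → u t = g t) ∧
      ∀ t ∈ Set.Icc a b, HasDerivWithinAt u (A t (u t)) (Set.Icc a b) t := by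
  set u : ℝ → E := fun t => if t ≤ c then f t else g t with hu
  have hu1 : ∀ s ∈ Set.Icc a c, u s = f s := fun s hs => if_pos hs.2
  have hu2 : ∀ s ∈ Set.Icc c b, u s = g s := by
    intro s hs
    by_cases h : s ≤ c
    · have hsc : s = c := le_antisymm h hs.1
      simp [hu, hsc, hfg]
    · simp [hu, if_neg h]
  refine ⟨u, fun t ht => if_pos ht, fun t ht => ?_, fun t ht => ?_⟩
  · by_cases h : t ≤ c
    · have : t = c := le_antisymm h ht
      simp [hu, this, hfg]
    · simp [hu, if_neg h]
  · rw [← Set.Icc_union_Icc_eq_Icc hac hcb]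
    apply HasDerivWithinAt.union
    · by_cases h : t ≤ c
      · have htm : t ∈ Set.Icc a c := ⟨ht.1, h⟩
        have h2 := (hf t htm).congr hu1 (hu1 t htm)
        rwa [← hu1 t htm] at h2
      · exact myHasDerivWithinAt_of_nmem_closure
          (by rw [isClosed_Icc.closure_eq]; exact fun hm => h hm.2)
    · by_cases h : c ≤ t
      · have htm : t ∈ Set.Icc c b := ⟨h, ht.2⟩
        have h2 := (hg t htm).congr hu2 (hu2 t htm)
        rwa [← hu2 t htm] at h2
      · exact myHasDerivWithinAt_of_nmem_closure
          (by rw [isClosed_Icc.closure_eq]; exact fun hm => h hm.1)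



/-- Forward existence on `Icc t₀ b`. -/
theorem linearODE_exists_right (A : ℝ → E →L[ℝ] E) (hA : Continuous A)
    {t₀ b : ℝ} (htb : t₀ ≤ b) (x₀ : E) :
    ∃ f : ℝ → E, f t₀ = x₀ ∧ ∀ t ∈ Set.Icc t₀ b,
      HasDerivWithinAt f (A t (f t)) (Set.Icc t₀ b) t := by
  obtain ⟨K, hK⟩ := (isCompact_Icc (a := t₀) (b := b)).exists_bound_of_continuousOn
    hA.continuousOn
  set M : ℝ := max K 1 with hMdef
  have hM : 0 < M := lt_of_lt_of_le one_pos (le_max_right _ _)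
  have hbd : ∀ t ∈ Set.Icc t₀ b, ‖A t‖ ≤ M := fun t ht => (hK t ht).trans (le_max_left _ _)
  set h : ℝ := 1 / (2 * M) with hhdef
  have hh0 : 0 < h := by positivity
  have key : ∀ n : ℕ, ∃ f : ℝ → E, f t₀ = x₀ ∧
      ∀ t ∈ Set.Icc t₀ (min (t₀ + n * h) b),
        HasDerivWithinAt f (A t (f t)) (Set.Icc t₀ (min (t₀ + n * h) b)) t := by
    intro n
    induction n with
    | zero =>
      have hmin : min (t₀ + (0 : ℕ) * h) b = t₀ := by
        simp [htb]
      refine ⟨fun _ => x₀, rfl, ?_⟩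
      rw [hmin]
      intro t ht
      rw [Set.Icc_self] at ht ⊢
      rw [Set.mem_singleton_iff] at ht
      subst ht
      exact myHasDerivWithinAt_singleton _ _ _
    | succ n ih =>
      obtain ⟨f, hf0, hf⟩ := ih
      by_cases hcase : b ≤ t₀ + n * h
      · have e1 : min (t₀ + n * h) b = b := min_eq_right hcase
        have e2 : min (t₀ + (n + 1 : ℕ) * h) b = b := by
          apply min_eq_right
          push_cast
          nlinarith
        rw [e2]; rw [e1] at hf
        exact ⟨f, hf0, hf⟩
      · push_neg at hcase
        set c : ℝ := t₀ + n * h with hc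
        have e1 : min (t₀ + n * h) b = c := min_eq_left (le_of_lt hcase)
        have hct₀ : t₀ ≤ c := by
          have : (0:ℝ) ≤ n * h := by positivity
          linarith
        have hcb : c ≤ b := le_of_lt hcase
        set d : ℝ := min (c + h) b with hd
        have hcd : c ≤ d := le_min (by linarith) hcb
        have hdb : d ≤ b := min_le_right _ _
        -- step solution on Icc c d starting at f c
        obtain ⟨g, hg0, hg⟩ := linearODE_step A hA hM
          (fun t ht => hbd t ⟨le_trans hct₀ ht.1, le_trans ht.2 hdb⟩)
          (⟨le_refl c, hcd⟩ : c ∈ Set.Icc c d)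
          (by
            have : d - c ≤ h := by
              have := min_le_left (c + h) b
              simp only [hd]
              linarith [min_le_left (c + h) b]
            simpa [hhdef] using this)
          (by simp [hhdef]; positivity) (f c)
        rw [e1] at hf
        obtain ⟨u, hu1, hu2, hu⟩ := linearODE_glue A hct₀ hcd hf
          (fun t ht => hg t ht) hg0.symm
        have e2 : min (t₀ + (n + 1 : ℕ) * h) b = d := by
          rw [hd, hc]
          push_cast
          congr 1
          ring
        rw [e2]
        exact ⟨u, by rw [hu1 t₀ hct₀, hf0], hu⟩
  -- choose n large enough
  obtain ⟨n, hn⟩ := exists_nat_ge ((b - t₀) / h)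
  have hbig : b ≤ t₀ + n * h := by
    rw [div_le_iff₀ hh0] at hn
    linarith
  obtain ⟨f, hf0, hf⟩ := key n
  rw [min_eq_right hbig] at hf
  exact ⟨f, hf0, hf⟩


/-- Backward existence via time reversal. -/
theorem linearODE_exists_left (A : ℝ → E →L[ℝ] E) (hA : Continuous A)
    {a t₀ : ℝ} (hat : a ≤ t₀) (x₀ : E) :
    ∃ f : ℝ → E, f t₀ = x₀ ∧ ∀ t ∈ Set.Icc a t₀,
      HasDerivWithinAt f (A t (f t)) (Set.Icc a t₀) t := by
  set A' : ℝ → E →L[ℝ] E := fun s => -(A (-s)) with hA'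
  have hA'c : Continuous A' := (hA.comp continuous_neg).neg
  obtain ⟨g, hg0, hg⟩ := linearODE_exists_right A' hA'c (neg_le_neg hat) x₀
  refine ⟨fun t => g (-t), by simpa using hg0, ?_⟩
  intro t ht
  have hmt : -t ∈ Set.Icc (-t₀) (-a) := ⟨neg_le_neg ht.2, neg_le_neg ht.1⟩
  have hmaps : Set.MapsTo (fun t : ℝ => -t) (Set.Icc a t₀) (Set.Icc (-t₀) (-a)) :=
    fun s hs => ⟨neg_le_neg hs.2, neg_le_neg hs.1⟩
  have hneg : HasDerivWithinAt (fun t : ℝ => -t) (-1 : ℝ) (Set.Icc a t₀) t :=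
    (hasDerivAt_neg t).hasDerivWithinAt
  have := (hg (-t) hmt).scomp t hneg hmaps
  simpa [hA', Function.comp_def] using this


/-- Existence on any `Icc a b` containing `t₀`. -/
theorem linearODE_exists_Icc (A : ℝ → E →L[ℝ] E) (hA : Continuous A)
    {a b t₀ : ℝ} (ht₀ : t₀ ∈ Set.Icc a b) (x₀ : E) :
    ∃ f : ℝ → E, f t₀ = x₀ ∧ ∀ t ∈ Set.Icc a b,
      HasDerivWithinAt f (A t (f t)) (Set.Icc a b) t := by
  obtain ⟨f, hf0, hf⟩ := linearODE_exists_left A hA ht₀.1 x₀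
  obtain ⟨g, hg0, hg⟩ := linearODE_exists_right A hA ht₀.2 x₀
  obtain ⟨u, hu1, hu2, hu⟩ := linearODE_glue A ht₀.1 ht₀.2 hf hg (by rw [hf0, hg0])
  exact ⟨u, by rw [hu1 t₀ le_rfl, hf0], hu⟩



/-- Global existence for a linear ODE with continuous coefficients. -/
theorem linearODE_exists (A : ℝ → E →L[ℝ] E) (hA : Continuous A) (t₀ : ℝ) (x₀ : E) :
    ∃ f : ℝ → E, f t₀ = x₀ ∧ ∀ t, HasDerivAt f (A t (f t)) t := by
  have H : ∀ n : ℕ, ∃ f : ℝ → E, f t₀ = x₀ ∧ ∀ t ∈ Set.Icc (t₀ - (n+1) : ℝ) (t₀ + (n+1)),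
      HasDerivWithinAt f (A t (f t)) (Set.Icc (t₀ - (n+1) : ℝ) (t₀ + (n+1))) t := by
    intro n
    exact linearODE_exists_Icc A hA ⟨by push_cast; linarith [Nat.cast_nonneg (α := ℝ) n],
      by push_cast; linarith [Nat.cast_nonneg (α := ℝ) n]⟩ x₀
  choose F hF0 hF using H
  have hderiv : ∀ n : ℕ, ∀ t ∈ Set.Ioo (t₀ - (n+1) : ℝ) (t₀ + (n+1)),
      HasDerivAt (F n) (A t (F n t)) t := fun n t ht =>
    (hF n t (Set.Ioo_subset_Icc_self ht)).hasDerivAt (Icc_mem_nhds ht.1 ht.2)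
  have ht₀mem : ∀ n : ℕ, t₀ ∈ Set.Ioo (t₀ - (n+1) : ℝ) (t₀ + (n+1)) := fun n =>
    ⟨by linarith [Nat.cast_nonneg (α := ℝ) n], by linarith [Nat.cast_nonneg (α := ℝ) n]⟩
  have hagree : ∀ m n : ℕ, m ≤ n →
      Set.EqOn (F m) (F n) (Set.Ioo (t₀ - (m+1) : ℝ) (t₀ + (m+1))) := by
    intro m n hmn
    have hsub : Set.Ioo (t₀ - (m+1) : ℝ) (t₀ + (m+1)) ⊆
        Set.Ioo (t₀ - (n+1) : ℝ) (t₀ + (n+1)) := by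
      apply Set.Ioo_subset_Ioo <;>
        · have : (m : ℝ) ≤ n := Nat.cast_le.mpr hmn
          linarith
    exact linearODE_unique_Ioo A hA (ht₀mem m) (hderiv m)
      (fun t ht => hderiv n t (hsub ht)) (by rw [hF0 m, hF0 n])
  set f : ℝ → E := fun t => F (⌈|t - t₀|⌉₊) t with hfdef
  have hmem : ∀ s : ℝ, s ∈ Set.Ioo (t₀ - ((⌈|s - t₀|⌉₊ : ℝ) + 1)) (t₀ + ((⌈|s - t₀|⌉₊ : ℝ) + 1)) := by
    intro s
    have h1 : |s - t₀| < (⌈|s - t₀|⌉₊ : ℝ) + 1 := lt_of_le_of_lt (Nat.le_ceil _) (by linarith)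
    have h2 := abs_lt.mp h1
    exact ⟨by linarith [h2.1], by linarith [h2.2]⟩
  refine ⟨f, by simp [hfdef, hF0], ?_⟩
  intro t
  set m : ℕ := ⌈|t - t₀|⌉₊ with hm
  have hev : f =ᶠ[𝓝 t] F m := by
    have hopen : IsOpen {s : ℝ | |s - t₀| < (m : ℝ) + 1} :=
      isOpen_lt (by fun_prop) continuous_const
    have htmem : t ∈ {s : ℝ | |s - t₀| < (m : ℝ) + 1} := by
      have h1 : |t - t₀| ≤ (m : ℝ) := by rw [hm]; exact_mod_cast Nat.le_ceil _
      simpa using lt_of_le_of_lt h1 (by linarith)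
    filter_upwards [hopen.mem_nhds htmem] with s hs
    have hsIoo : s ∈ Set.Ioo (t₀ - ((m : ℝ) + 1)) (t₀ + ((m : ℝ) + 1)) := by
      have := abs_lt.mp hs
      exact ⟨by linarith [this.1], by linarith [this.2]⟩
    rcases le_or_gt (⌈|s - t₀|⌉₊) m with h | h
    · exact hagree _ m h (hmem s)
    · exact (hagree m _ h.le hsIoo).symm
  have hd : HasDerivAt (F m) (A t (F m t)) t := hderiv m t (hmem t)
  have : HasDerivAt f (A t (F m t)) t := hd.congr_of_eventuallyEq hev
  exact this


end LinearODE

/-- Dimension-counting principle of the paper's Lemma 1.4: under the intertwining identity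
`B′(r) = C(r)∘B(r) − B(r)∘A(r)`, the space `Sol` of solutions of the first-order linear
system `σ′ = A σ` subject to the algebraic constraint `Bσ = 0` is mapped bijectively, by
the (linear) evaluation map `σ ↦ σ(r₀)`, onto the kernel of `B(r₀)`; in particular
`dim Sol = dim ker B(r₀)`. -/
theorem eval_bijOn_solutions {E F : Type*}
    [NormedAddCommGroup E] [NormedSpace ℝ E] [FiniteDimensional ℝ E]
    [NormedAddCommGroup F] [NormedSpace ℝ F] [FiniteDimensional ℝ F]
    (A : ℝ → E →L[ℝ] E) (C : ℝ → F →L[ℝ] F) (B : ℝ → E →L[ℝ] F)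
    (hA : Continuous A) (hC : Continuous C)
    (hB : ∀ r : ℝ, HasDerivAt B (C r ∘L B r - B r ∘L A r) r)
    (r₀ : ℝ) :
    Set.BijOn (fun σ : ℝ → E => σ r₀)
      {σ : ℝ → E | (∀ r : ℝ, HasDerivAt σ (A r (σ r)) r) ∧ ∀ r : ℝ, B r (σ r) = 0}
      (LinearMap.ker (B r₀ : E →ₗ[ℝ] F) : Set E) := by
  refine ⟨?_, ?_, ?_⟩
  · intro σ hσ
    simp only [SetLike.mem_coe, LinearMap.mem_ker]
    exact hσ.2 r₀
  · intro σ hσ τ hτ heq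
    exact linearODE_unique A hA hσ.1 hτ.1 heq
  · intro x hx
    obtain ⟨σ, hσ0, hσ⟩ := linearODE_exists A hA r₀ x
    have hconstraint : ∀ r : ℝ, B r (σ r) = 0 := by
      have hφ : ∀ r, HasDerivAt (fun r => B r (σ r)) (C r (B r (σ r))) r := by
        intro r
        have h1 := (hB r).clm_apply (hσ r)
        have h2 : (C r ∘L B r - B r ∘L A r) (σ r) + (B r) ((A r) (σ r))
            = C r (B r (σ r)) := by
          simp [ContinuousLinearMap.sub_apply, ContinuousLinearMap.comp_apply]
        rwa [h2] at h1
      have hzero : ∀ r, HasDerivAt (fun _ : ℝ => (0 : F))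
          (C r ((fun _ : ℝ => (0 : F)) r)) r := by
        intro r
        simpa using hasDerivAt_const r (0 : F)
      have hx0 : B r₀ (σ r₀) = 0 := by
        rw [hσ0]
        exact LinearMap.mem_ker.mp hx
      have := linearODE_unique C hC hφ hzero (by simpa using hx0)
      intro r
      exact congrFun this r
    exact ⟨σ, ⟨hσ, hconstraint⟩, hσ0⟩
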